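/- arXiv:0902.2441 — 2 statements merged into one kernel-verified Lean document; each statement's English description precedes it below -/
import Mathlib

section
/- Let q, n be positive integers with n ≤ q₀ - 2 where q₀ = (q-1)/2 if q is odd and q₀ = q/2 if q is even. Define Ĩ₀(q,n) as the set of n-tuples (p₁,...,p_n) of residues mod q with p_i ≢ ±p_j (mod q) for i < j and gcd(p₁,...,p_n,q)=1, modulo the equivalence: (p₁,...,p_n) ∼ (s₁,...,s_n) iff there exist l coprime to q and signs e_i ∈ {-1,1} such that (p₁,...,p_n) is a permutation of (e₁ls₁,...,e_nls_n) mod q. Then the number of equivalence classes |I₀(q,n)| is at least (1/q₀)·C(q₀, n). -/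
/-- Admissible tuples: `n`-tuples `(p₁,…,pₙ)` of residues mod `q` with
`pᵢ ≢ ±pⱼ (mod q)` for `i < j` and `gcd(p₁,…,pₙ,q) = 1` (the residues generate
the unit ideal of `ZMod q`). -/
def AdmissibleTuple (q n : ℕ) : Type :=
  { p : Fin n → ZMod q //
      (∀ i j : Fin n, i < j → p i ≠ p j ∧ p i ≠ -p j) ∧
        Ideal.span (Set.range p) = (⊤ : Ideal (ZMod q)) }

/-- The equivalence: `(p₁,…,pₙ) ∼ (s₁,…,sₙ)` iff there are `l` coprime to `q`
(a unit of `ZMod q`) and signs `eᵢ ∈ {±1}` such that `(p₁,…,pₙ)` is a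
permutation of `(e₁ls₁,…,eₙlsₙ)` mod `q`. -/
def TupleEquiv (q n : ℕ) (a b : AdmissibleTuple q n) : Prop :=
  ∃ l : (ZMod q)ˣ, ∃ e : Fin n → ZMod q, (∀ i, e i = 1 ∨ e i = -1) ∧
    ∃ σ : Equiv.Perm (Fin n), ∀ i, a.val i = e i * (l : ZMod q) * b.val (σ i)

lemma tupleEquiv_equivalence (q n : ℕ) : Equivalence (TupleEquiv q n) := by
  constructor
  · intro a
    exact ⟨1, fun _ => 1, fun _ => Or.inl rfl, Equiv.refl _, fun i => by simp⟩
  · rintro a b ⟨l, e, he, σ, hσ⟩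
    refine ⟨l⁻¹, fun i => e (σ.symm i), fun i => he _, σ.symm, fun i => ?_⟩
    have h1 : e (σ.symm i) * e (σ.symm i) = 1 := by
      rcases he (σ.symm i) with h | h <;> rw [h] <;> ring
    have hl : ((l⁻¹ : (ZMod q)ˣ) : ZMod q) * (l : ZMod q) = 1 := by
      rw [← Units.val_mul, inv_mul_cancel, Units.val_one]
    have hab := hσ (σ.symm i)
    rw [σ.apply_symm_apply] at hab
    calc b.val i = (e (σ.symm i) * e (σ.symm i)) * (((l⁻¹ : (ZMod q)ˣ) : ZMod q) * (l : ZMod q) * b.val i) := by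
          rw [h1, hl]; ring
      _ = e (σ.symm i) * ((l⁻¹ : (ZMod q)ˣ) : ZMod q) * (e (σ.symm i) * (l : ZMod q) * b.val i) := by ring
      _ = e (σ.symm i) * ((l⁻¹ : (ZMod q)ˣ) : ZMod q) * a.val (σ.symm i) := by rw [← hab]
  · rintro a b c ⟨l, e, he, σ, hσ⟩ ⟨m, f, hf, τ, hτ⟩
    refine ⟨l * m, fun i => e i * f (σ i), fun i => ?_, σ.trans τ, fun i => ?_⟩
    · rcases he i with h | h <;> rcases hf (σ i) with h' | h' <;> simp [h, h']
    · rw [hσ i, hτ (σ i)]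
      simp only [Equiv.trans_apply, Units.val_mul]
      ring

lemma repA (q q₀ a b : ℕ) (h2 : 2*q₀ ≤ q) (ha : 1 ≤ a) (ha' : a ≤ q₀)
    (hb : 1 ≤ b) (hb' : b ≤ q₀)
    (h : (a:ZMod q) = (b:ZMod q) ∨ (a:ZMod q) = -(b:ZMod q)) : a = b := by
  have hq : 0 < q := by omega
  haveI : NeZero q := ⟨by omega⟩
  rcases h with h | h
  · have h3 : a % q = b % q := (ZMod.natCast_eq_natCast_iff a b q).mp h
    rw [Nat.mod_eq_of_lt (by omega), Nat.mod_eq_of_lt (by omega)] at h3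
    exact h3
  · have h0 : ((a + b : ℕ) : ZMod q) = 0 := by push_cast; rw [h]; ring
    have hdvd : q ∣ a + b := (ZMod.natCast_eq_zero_iff _ _).mp h0
    have hle : q ≤ a + b := Nat.le_of_dvd (by omega) hdvd
    omega

/-- Core step: if `s` and `s'` are two normalized tuples equivalent to `p`
with the same distinguished index `τ i0 = τ' i0`, then every value of `s`
is a value of `s'`. -/
lemma key_sub (q q₀ n : ℕ) (h2 : 2*q₀ ≤ q) (hn : 0 < n)
    (s s' p : Fin n → ℕ)
    (hs1 : ∀ i, 1 ≤ s i) (hs2 : ∀ i, s i ≤ q₀)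
    (hs1' : ∀ i, 1 ≤ s' i) (hs2' : ∀ i, s' i ≤ q₀)
    (hs0 : s ⟨0, hn⟩ = 1) (hs0' : s' ⟨0, hn⟩ = 1)
    (m m' : (ZMod q)ˣ) (e e' : Fin n → ZMod q)
    (he : ∀ i, e i = 1 ∨ e i = -1) (he' : ∀ i, e' i = 1 ∨ e' i = -1)
    (τ τ' : Equiv.Perm (Fin n))
    (hrel : ∀ i, ((s i : ℕ) : ZMod q) = e i * (m : ZMod q) * ((p (τ i) : ℕ) : ZMod q))
    (hrel' : ∀ i, ((s' i : ℕ) : ZMod q) = e' i * (m' : ZMod q) * ((p (τ' i) : ℕ) : ZMod q))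
    (hk : τ ⟨0, hn⟩ = τ' ⟨0, hn⟩) : ∀ i, ∃ j, s' j = s i := by
  set i0 : Fin n := ⟨0, hn⟩
  have hsq : ∀ x : Fin n → ZMod q, (∀ i, x i = 1 ∨ x i = -1) → ∀ i, x i * x i = 1 := by
    intro x hx i; rcases hx i with h | h <;> rw [h] <;> ring
  -- the distinguished common value
  have h1 : (1 : ZMod q) = e i0 * (m : ZMod q) * ((p (τ i0) : ℕ) : ZMod q) := by
    have := hrel i0; rwa [hs0, Nat.cast_one] at this
  have h1' : (1 : ZMod q) = e' i0 * (m' : ZMod q) * ((p (τ i0) : ℕ) : ZMod q) := by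
    have := hrel' i0; rwa [hs0', Nat.cast_one, ← hk] at this
  have hE : e i0 * e i0 = 1 := hsq e he i0
  have hE' : e' i0 * e' i0 = 1 := hsq e' he' i0
  have hstep : e' i0 * ((m' : (ZMod q)ˣ) : ZMod q) = e i0 * (m : ZMod q) := by
    calc e' i0 * ((m' : (ZMod q)ˣ) : ZMod q)
        = e' i0 * (m' : ZMod q) * 1 := by ring
      _ = e' i0 * (m' : ZMod q) * (e i0 * (m : ZMod q) * ((p (τ i0) : ℕ) : ZMod q)) := by rw [← h1]
      _ = (e' i0 * (m' : ZMod q) * ((p (τ i0) : ℕ) : ZMod q)) * (e i0 * (m : ZMod q)) := by ring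
      _ = 1 * (e i0 * (m : ZMod q)) := by rw [← h1']
      _ = e i0 * (m : ZMod q) := by ring
  have hm' : ((m' : (ZMod q)ˣ) : ZMod q) = (e i0 * e' i0) * (m : ZMod q) := by
    calc ((m' : (ZMod q)ˣ) : ZMod q) = (e' i0 * e' i0) * (m' : ZMod q) := by rw [hE']; ring
      _ = e' i0 * (e' i0 * (m' : ZMod q)) := by ring
      _ = e' i0 * (e i0 * (m : ZMod q)) := by rw [hstep]
      _ = (e i0 * e' i0) * (m : ZMod q) := by ring
  intro i
  refine ⟨τ'.symm (τ i), ?_⟩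
  have hA := hrel i
  have hB := hrel' (τ'.symm (τ i))
  rw [Equiv.apply_symm_apply] at hB
  -- s' j = δ * s i with δ = e' j * (e i0 * e' i0) * e i
  set j : Fin n := τ'.symm (τ i)
  have hδval : ((s' j : ℕ) : ZMod q) = (e' j * (e i0 * e' i0) * e i) * ((s i : ℕ) : ZMod q) := by
    have hmp : (m : ZMod q) * ((p (τ i) : ℕ) : ZMod q) = e i * ((s i : ℕ) : ZMod q) := by
      calc (m : ZMod q) * ((p (τ i) : ℕ) : ZMod q)
          = (e i * e i) * ((m : ZMod q) * ((p (τ i) : ℕ) : ZMod q)) := by rw [hsq e he i]; ring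
        _ = e i * (e i * (m : ZMod q) * ((p (τ i) : ℕ) : ZMod q)) := by ring
        _ = e i * ((s i : ℕ) : ZMod q) := by rw [← hA]
    calc ((s' j : ℕ) : ZMod q) = e' j * (m' : ZMod q) * ((p (τ i) : ℕ) : ZMod q) := hB
      _ = e' j * (e i0 * e' i0) * ((m : ZMod q) * ((p (τ i) : ℕ) : ZMod q)) := by rw [hm']; ring
      _ = (e' j * (e i0 * e' i0) * e i) * ((s i : ℕ) : ZMod q) := by rw [hmp]; ring
  have hδ : e' j * (e i0 * e' i0) * e i = 1 ∨ e' j * (e i0 * e' i0) * e i = -1 := by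
    rcases he' j with h1 | h1 <;> rcases he i0 with h2 | h2 <;> rcases he' i0 with h3 | h3 <;>
      rcases he i with h4 | h4 <;> rw [h1, h2, h3, h4] <;> [left; right; right; left; right; left; left; right; right; left; left; right; left; right; right; left] <;> ring
  refine repA q q₀ (s' j) (s i) h2 (hs1' j) (hs2' j) (hs1 i) (hs2 i) ?_
  rcases hδ with h | h
  · left; rw [hδval, h, one_mul]
  · right; rw [hδval, h]; ring

lemma key_inj (q q₀ n : ℕ) (h2 : 2*q₀ ≤ q) (hn : 0 < n)
    (s s' p : Fin n → ℕ)
    (hs1 : ∀ i, 1 ≤ s i) (hs2 : ∀ i, s i ≤ q₀)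
    (hs1' : ∀ i, 1 ≤ s' i) (hs2' : ∀ i, s' i ≤ q₀)
    (hms : StrictMono s) (hms' : StrictMono s')
    (hs0 : s ⟨0, hn⟩ = 1) (hs0' : s' ⟨0, hn⟩ = 1)
    (m m' : (ZMod q)ˣ) (e e' : Fin n → ZMod q)
    (he : ∀ i, e i = 1 ∨ e i = -1) (he' : ∀ i, e' i = 1 ∨ e' i = -1)
    (τ τ' : Equiv.Perm (Fin n))
    (hrel : ∀ i, ((s i : ℕ) : ZMod q) = e i * (m : ZMod q) * ((p (τ i) : ℕ) : ZMod q))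
    (hrel' : ∀ i, ((s' i : ℕ) : ZMod q) = e' i * (m' : ZMod q) * ((p (τ' i) : ℕ) : ZMod q))
    (hk : τ ⟨0, hn⟩ = τ' ⟨0, hn⟩) : s = s' := by
  have h1 := key_sub q q₀ n h2 hn s s' p hs1 hs2 hs1' hs2' hs0 hs0' m m' e e' he he' τ τ' hrel hrel' hk
  have h2' := key_sub q q₀ n h2 hn s' s p hs1' hs2' hs1 hs2 hs0' hs0 m' m e' e he' he τ' τ hrel' hrel hk.symm
  have hrange : Set.range s = Set.range s' := by
    ext x
    constructor
    · rintro ⟨i, rfl⟩; obtain ⟨j, hj⟩ := h1 i; exact ⟨j, hj⟩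
    · rintro ⟨i, rfl⟩; obtain ⟨j, hj⟩ := h2' i; exact ⟨j, hj⟩
  haveI : WellFoundedLT (Fin n) := Finite.to_wellFoundedLT
  exact (hms.range_inj hms').mp hrange

/-- The number of equivalence classes `|I₀(q,n)|` is at least `(1/q₀)·C(q₀,n)`,
where `q₀ = (q-1)/2` for `q` odd and `q₀ = q/2` for `q` even. -/
theorem stmt_13 (q n q₀ : ℕ) (hq : 0 < q) (hn : 2 ≤ n)
    (hq₀ : q₀ = if q % 2 = 1 then (q - 1) / 2 else q / 2) (hnq₀ : n ≤ q₀ - 2) :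
    (Nat.choose q₀ n : ℚ) / q₀ ≤ Nat.card (Quot (TupleEquiv q n)) := by
  classical
  haveI : NeZero q := ⟨hq.ne'⟩
  have hq₀n : n + 2 ≤ q₀ := by omega
  have h2q : 2 * q₀ ≤ q := by
    rcases Nat.mod_two_eq_zero_or_one q with h | h <;> simp [h] at hq₀ <;> omega
  have hnpos : 0 < n := by omega
  set i0 : Fin n := ⟨0, hnpos⟩ with hi0
  -- the finset of parameters
  set s0 : Finset (Finset ℕ) := Finset.powersetCard (n-1) (Finset.Icc 2 q₀) with hs0def
  have hcard_s0 : s0.card = Nat.choose (q₀ - 1) (n-1) := by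
    rw [hs0def, Finset.card_powersetCard, Nat.card_Icc,
      show q₀ + 1 - 2 = q₀ - 1 from by omega]
  have hmem_s0 : ∀ A ∈ s0, A ⊆ Finset.Icc 2 q₀ ∧ A.card = n - 1 := by
    intro A hA; exact Finset.mem_powersetCard.mp hA
  have hBcard : ∀ A ∈ s0, (insert 1 A).card = n := by
    intro A hA
    obtain ⟨hsub, hcard⟩ := hmem_s0 A hA
    have h1A : 1 ∉ A := by
      intro h; have := hsub h; rw [Finset.mem_Icc] at this; omega
    rw [Finset.card_insert_of_notMem h1A, hcard]; omega
  -- the normalized tuples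
  let tup : Finset ℕ → Fin n → ℕ := fun A =>
    if h : (insert 1 A).card = n then ((insert 1 A).orderEmbOfFin h : Fin n → ℕ) else fun _ => 1
  have htup_eq : ∀ A (h : A ∈ s0),
      tup A = ((insert 1 A).orderEmbOfFin (hBcard A h) : Fin n → ℕ) := by
    intro A h; simp only [tup, dif_pos (hBcard A h)]
  have htup_mono : ∀ A ∈ s0, StrictMono (tup A) := by
    intro A h; rw [htup_eq A h]; exact ((insert 1 A).orderEmbOfFin (hBcard A h)).strictMono
  have htup_range : ∀ A (h : A ∈ s0), Set.range (tup A) = ↑(insert 1 A) := by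
    intro A h; rw [htup_eq A h]; exact Finset.range_orderEmbOfFin _ (hBcard A h)
  have htup_mem : ∀ A (h : A ∈ s0) i, tup A i ∈ insert 1 A := by
    intro A h i
    have : tup A i ∈ Set.range (tup A) := ⟨i, rfl⟩
    rw [htup_range A h] at this
    exact_mod_cast this
  have htup_lb : ∀ A (h : A ∈ s0) i, 1 ≤ tup A i := by
    intro A h i
    have := htup_mem A h i
    rcases Finset.mem_insert.mp this with h' | h'
    · omega
    · have := (hmem_s0 A h).1 h'; rw [Finset.mem_Icc] at this; omega
  have htup_ub : ∀ A (h : A ∈ s0) i, tup A i ≤ q₀ := by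
    intro A h i
    have := htup_mem A h i
    rcases Finset.mem_insert.mp this with h' | h'
    · omega
    · have := (hmem_s0 A h).1 h'; rw [Finset.mem_Icc] at this; omega
  have htup_zero : ∀ A (h : A ∈ s0), tup A i0 = 1 := by
    intro A h
    have h1 : (1 : ℕ) ∈ (↑(insert 1 A) : Set ℕ) := by simp
    rw [← htup_range A h] at h1
    obtain ⟨i, hi⟩ := h1
    have hle : tup A i0 ≤ tup A i := (htup_mono A h).monotone (by simp [hi0, Fin.le_def])
    have := htup_lb A h i0
    omega
  -- admissibility
  have hadm : ∀ A (h : A ∈ s0),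
      (∀ i j : Fin n, i < j →
          (fun i => ((tup A i : ℕ) : ZMod q)) i ≠ (fun i => ((tup A i : ℕ) : ZMod q)) j ∧
          (fun i => ((tup A i : ℕ) : ZMod q)) i ≠ -(fun i => ((tup A i : ℕ) : ZMod q)) j) ∧
        Ideal.span (Set.range (fun i => ((tup A i : ℕ) : ZMod q))) = (⊤ : Ideal (ZMod q)) := by
    intro A h
    constructor
    · intro i j hij
      have hne : tup A i ≠ tup A j := ((htup_mono A h) hij).ne
      constructor
      · intro hc
        exact hne (repA q q₀ _ _ h2q (htup_lb A h i) (htup_ub A h i) (htup_lb A h j)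
          (htup_ub A h j) (Or.inl hc))
      · intro hc
        exact hne (repA q q₀ _ _ h2q (htup_lb A h i) (htup_ub A h i) (htup_lb A h j)
          (htup_ub A h j) (Or.inr hc))
    · rw [Ideal.eq_top_iff_one]
      apply Ideal.subset_span
      refine ⟨i0, ?_⟩
      show ((tup A i0 : ℕ) : ZMod q) = 1
      rw [htup_zero A h, Nat.cast_one]
  -- the map to the quotient
  have hs0ne : s0.Nonempty := Finset.card_pos.mp (by
    rw [hcard_s0]; exact Nat.choose_pos (by omega))
  obtain ⟨Adef, hAdef⟩ := hs0ne
  let Φ : Finset ℕ → Quot (TupleEquiv q n) := fun A =>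
    if h : A ∈ s0 then Quot.mk _ (⟨fun i => ((tup A i : ℕ) : ZMod q), hadm A h⟩ : AdmissibleTuple q n)
    else Quot.mk _ (⟨fun i => ((tup Adef i : ℕ) : ZMod q), hadm Adef hAdef⟩ : AdmissibleTuple q n)
  -- fibers of Φ have at most n elements
  have hfiber : ∀ c ∈ s0.image Φ, (s0.filter (fun A => Φ A = c)).card ≤ n := by
    intro c hc
    obtain ⟨B, hBs, hBc⟩ := Finset.mem_image.mp hc
    set Pk : Finset ℕ → Fin n → Prop := fun A k =>
      ∃ m : (ZMod q)ˣ, ∃ e : Fin n → ZMod q, (∀ i, e i = 1 ∨ e i = -1) ∧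
        ∃ τ : Equiv.Perm (Fin n),
          (∀ i, ((tup A i : ℕ) : ZMod q) = e i * (m : ZMod q) * ((tup B (τ i) : ℕ) : ZMod q)) ∧
          τ i0 = k with hPkdef
    have hPk : ∀ A ∈ s0.filter (fun A => Φ A = c), ∃ k, Pk A k := by
      intro A hA
      rw [Finset.mem_filter] at hA
      have hΦ : Φ A = Φ B := hA.2.trans hBc.symm
      simp only [Φ, dif_pos hA.1, dif_pos hBs] at hΦ
      have hrel := ((tupleEquiv_equivalence q n).eqvGen_iff).mp (Quot.eq.mp hΦ)
      obtain ⟨l, e, he, σ, hσ⟩ := hrel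
      exact ⟨σ i0, l, e, he, σ, fun i => hσ i, rfl⟩
    let g : Finset ℕ → Fin n := fun A => if h : ∃ k, Pk A k then h.choose else i0
    have hg : ∀ A ∈ s0.filter (fun A => Φ A = c), Pk A (g A) := by
      intro A hA
      have h := hPk A hA
      simp only [g, dif_pos h]
      exact h.choose_spec
    calc (s0.filter (fun A => Φ A = c)).card
        ≤ (Finset.univ : Finset (Fin n)).card := by
          apply Finset.card_le_card_of_injOn g (fun _ _ => Finset.mem_univ _)
          intro A hA A' hA' hgg
          obtain ⟨m, e, he, τ, hrel, hτ0⟩ := hg A hA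
          obtain ⟨m', e', he', τ', hrel', hτ0'⟩ := hg A' hA'
          rw [Finset.mem_coe, Finset.mem_filter] at hA hA'
          have hk : τ i0 = τ' i0 := by rw [hτ0, hτ0', hgg]
          have htt : tup A = tup A' :=
            key_inj q q₀ n h2q hnpos (tup A) (tup A') (tup B)
              (htup_lb A hA.1) (htup_ub A hA.1) (htup_lb A' hA'.1) (htup_ub A' hA'.1)
              (htup_mono A hA.1) (htup_mono A' hA'.1)
              (htup_zero A hA.1) (htup_zero A' hA'.1)
              m m' e e' he he' τ τ' hrel hrel' hk
          have hins : (insert 1 A : Finset ℕ) = insert 1 A' := by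
            apply Finset.coe_injective
            rw [← htup_range A hA.1, ← htup_range A' hA'.1, htt]
          have h1A : 1 ∉ A := by
            intro h; have := (hmem_s0 A hA.1).1 h; rw [Finset.mem_Icc] at this; omega
          have h1A' : 1 ∉ A' := by
            intro h; have := (hmem_s0 A' hA'.1).1 h; rw [Finset.mem_Icc] at this; omega
          rw [← Finset.erase_insert h1A, ← Finset.erase_insert h1A', hins]
      _ = n := by simp
  -- counting
  have hcount : s0.card ≤ n * (s0.image Φ).card :=
    Finset.card_le_mul_card_image s0 n hfiber
  haveI : Finite (AdmissibleTuple q n) := by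
    unfold AdmissibleTuple; infer_instance
  haveI : Finite (Quot (TupleEquiv q n)) := Quot.finite _
  haveI : Fintype (Quot (TupleEquiv q n)) := Fintype.ofFinite _
  have himg : (s0.image Φ).card ≤ Nat.card (Quot (TupleEquiv q n)) := by
    rw [Nat.card_eq_fintype_card]
    exact Finset.card_le_univ _
  have hineq : Nat.choose (q₀-1) (n-1) ≤ n * Nat.card (Quot (TupleEquiv q n)) := by
    rw [← hcard_s0]
    exact hcount.trans (Nat.mul_le_mul_left n himg)
  -- the binomial identity
  have hid : q₀ * Nat.choose (q₀-1) (n-1) = Nat.choose q₀ n * n := by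
    have h := Nat.add_one_mul_choose_eq (q₀-1) (n-1)
    have h1 : q₀ - 1 + 1 = q₀ := by omega
    have h2 : n - 1 + 1 = n := by omega
    rw [h1, h2] at h
    exact h
  -- final arithmetic
  set N := Nat.card (Quot (TupleEquiv q n)) with hN
  have hmain : Nat.choose q₀ n ≤ q₀ * N := by
    have h1 : Nat.choose q₀ n * n ≤ (q₀ * N) * n := by
      calc Nat.choose q₀ n * n = q₀ * Nat.choose (q₀-1) (n-1) := hid.symm
        _ ≤ q₀ * (n * N) := Nat.mul_le_mul_left q₀ hineq
        _ = (q₀ * N) * n := by ring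
    exact Nat.le_of_mul_le_mul_right h1 hnpos
  have hq₀pos : (0:ℚ) < (q₀ : ℚ) := by exact_mod_cast (by omega : 0 < q₀)
  rw [div_le_iff₀ hq₀pos]
  calc (Nat.choose q₀ n : ℚ) ≤ ((q₀ * N : ℕ) : ℚ) := by exact_mod_cast hmain
    _ = (N : ℚ) * (q₀ : ℚ) := by push_cast; ring
end

section
/- With notation as in the equivalence-class counting for lens spaces: let q₀, n, k = q₀ - n, and let r be the number of residues mod q not coprime to q that are ≤ q₀. Set u = r - k if r > k and u = 0 if r ≤ k. Then |I₀(q,n)| ≥ ∑_{t=u}^{r} (1/(n-t))·C(q₀-1-r, n-1-t)·C(r, t). -/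
namespace Stmt14

set_option linter.unusedSectionVars false

variable {q : ℕ} [NeZero q]

/-- Fold a nonzero residue to its representative with value in `[1,q₀]`. -/
def nrm (q₀ : ℕ) (z : ZMod q) : ZMod q := if z.val ≤ q₀ then z else -z

lemma nrm_neg {q₀ : ℕ} (h1 : 2 * q₀ ≤ q) (h2 : q ≤ 2 * q₀ + 1) (z : ZMod q) :
    nrm q₀ (-z) = nrm q₀ z := by
  by_cases hz0 : z = 0
  · simp [hz0]
  by_cases hzz : -z = z
  · rw [hzz]
  have hzn0 : (-z) ≠ 0 := neg_ne_zero.mpr hz0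
  have hvz : z.val ≠ 0 := fun h => hz0 (ZMod.val_injective q (by simpa using h))
  have hvnz : (-z).val = q - z.val := by
    rw [ZMod.neg_val]; simp [hz0]
  have hvlt : z.val < q := ZMod.val_lt z
  unfold nrm
  by_cases hle : z.val ≤ q₀
  · have hne : ¬ (-z).val ≤ q₀ := by
      intro hcon
      have h3 : z.val = q₀ := by omega
      have h4 : (-z).val = z.val := by omega
      exact hzz (ZMod.val_injective q h4)
    simp [hle, hne]
  · have hne : (-z).val ≤ q₀ := by omega
    simp [hle, hne]

lemma nrm_inA {q₀ : ℕ} (h1 : 2 * q₀ ≤ q) (h2 : q ≤ 2 * q₀ + 1) {z : ZMod q} (hz : z ≠ 0) :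
    1 ≤ (nrm q₀ z).val ∧ (nrm q₀ z).val ≤ q₀ := by
  have hvz : z.val ≠ 0 := fun h => hz (ZMod.val_injective q (by simpa using h))
  have hvlt : z.val < q := ZMod.val_lt z
  have hvnz : (-z).val = q - z.val := by rw [ZMod.neg_val]; simp [hz]
  unfold nrm
  by_cases hle : z.val ≤ q₀
  · simp [hle]; omega
  · simp [hle]; omega

lemma nrm_uniq {q₀ : ℕ} (h1 : 2 * q₀ ≤ q) (h2 : q ≤ 2 * q₀ + 1) {z w : ZMod q}
    (hz : z.val ≤ q₀) (h : z = w ∨ z = -w) : z = nrm q₀ w := by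
  rcases h with h | h
  · subst h; unfold nrm; simp [hz]
  · subst h
    rw [← nrm_neg h1 h2 w]
    unfold nrm; simp [hz]


noncomputable def tupleOf {α : Type*} (n : ℕ) (s : Finset α) (h : s.card = n) : Fin n → α :=
  fun i => (s.equivFin.symm (Fin.cast h.symm i)).1

lemma tupleOf_injective {α : Type*} (n : ℕ) (s : Finset α) (h : s.card = n) :
    Function.Injective (tupleOf n s h) := by
  intro i j hij
  have := s.equivFin.symm.injective (Subtype.ext hij)
  simpa [Fin.ext_iff] using congrArg Fin.val this

lemma tupleOf_mem {α : Type*} (n : ℕ) (s : Finset α) (h : s.card = n) (i : Fin n) :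
    tupleOf n s h i ∈ s := (s.equivFin.symm _).2

lemma tupleOf_surj {α : Type*} (n : ℕ) (s : Finset α) (h : s.card = n) {x : α} (hx : x ∈ s) :
    ∃ i : Fin n, tupleOf n s h i = x := by
  refine ⟨Fin.cast h (s.equivFin ⟨x, hx⟩), ?_⟩
  unfold tupleOf
  have : Fin.cast h.symm (Fin.cast h (s.equivFin ⟨x, hx⟩)) = s.equivFin ⟨x, hx⟩ := by
    ext; simp
  rw [this, Equiv.symm_apply_apply]

lemma pair_cond {q₀ : ℕ} (h1 : 2 * q₀ ≤ q) {x y : ZMod q}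
    (hx : 1 ≤ x.val ∧ x.val ≤ q₀) (hy : 1 ≤ y.val ∧ y.val ≤ q₀) (hxy : x ≠ y) : x ≠ -y := by
  intro h
  have hxy0 : x + y = 0 := by rw [h, neg_add_cancel]
  have hval : (x.val + y.val) % q = 0 := by
    have := ZMod.val_add x y
    rw [hxy0, ZMod.val_zero] at this; omega
  have hsum : x.val + y.val = q := by
    have hlt : x.val + y.val < q ∨ x.val + y.val = q := by omega
    rcases hlt with hl | hg
    · rw [Nat.mod_eq_of_lt hl] at hval; omega
    · exact hg
  have : x.val = y.val := by omega
  exact hxy (ZMod.val_injective q this)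

lemma adm {q₀ n : ℕ} (s : Finset (ZMod q))
    (h : s.card = n ∧ (∀ z ∈ s, 1 ≤ z.val ∧ z.val ≤ q₀) ∧ (1 : ZMod q) ∈ s ∧ 2 * q₀ ≤ q) :
    (∀ i j : Fin n, i < j → tupleOf n s h.1 i ≠ tupleOf n s h.1 j ∧
        tupleOf n s h.1 i ≠ -tupleOf n s h.1 j) ∧
      Ideal.span (Set.range (tupleOf n s h.1)) = (⊤ : Ideal (ZMod q)) := by
  obtain ⟨hc, hA, h1s, h2q⟩ := h
  constructor
  · intro i j hij
    have hne : tupleOf n s hc i ≠ tupleOf n s hc j :=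
      fun hcon => (Fin.ne_of_lt hij) (tupleOf_injective n s hc hcon)
    exact ⟨hne, pair_cond h2q (hA _ (tupleOf_mem n s hc i)) (hA _ (tupleOf_mem n s hc j)) hne⟩
  · rw [Ideal.eq_top_iff_one]
    obtain ⟨i, hi⟩ := tupleOf_surj n s hc h1s
    exact Ideal.subset_span ⟨i, hi⟩

noncomputable def mkTuple (q₀ n : ℕ) (s : Finset (ZMod q))
    (h : s.card = n ∧ (∀ z ∈ s, 1 ≤ z.val ∧ z.val ≤ q₀) ∧ (1 : ZMod q) ∈ s ∧ 2 * q₀ ≤ q) :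
    AdmissibleTuple q n := ⟨tupleOf n s h.1, adm s h⟩

open Classical in
noncomputable def tau {q n : ℕ} (a : AdmissibleTuple q n) : ℕ :=
  (Finset.univ.filter (fun i => ¬ IsUnit (a.val i))).card


lemma sign_mul_self {e : ZMod q} (he : e = 1 ∨ e = -1) : e * e = 1 := by
  rcases he with h | h <;> simp [h]

lemma sign_isUnit {e : ZMod q} (he : e = 1 ∨ e = -1) : IsUnit e := by
  rcases he with h | h <;> simp [h]

lemma te_refl (n : ℕ) (a : AdmissibleTuple q n) : TupleEquiv q n a a :=
  ⟨1, fun _ => 1, fun _ => Or.inl rfl, Equiv.refl _, fun i => by simp⟩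

lemma te_symm {n : ℕ} {a b : AdmissibleTuple q n} (h : TupleEquiv q n a b) :
    TupleEquiv q n b a := by
  obtain ⟨l, e, he, σ, hσ⟩ := h
  refine ⟨l⁻¹, fun j => e (σ.symm j), fun j => he _, σ.symm, fun j => ?_⟩
  have h1 := hσ (σ.symm j)
  rw [Equiv.apply_symm_apply] at h1
  rw [h1]
  have h2 : (e (σ.symm j)) * (e (σ.symm j)) = 1 := sign_mul_self (he _)
  field_simp
  ring_nf
  rw [sq, h2]
  simp

lemma te_trans {n : ℕ} {a b c : AdmissibleTuple q n} (hab : TupleEquiv q n a b)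
    (hbc : TupleEquiv q n b c) : TupleEquiv q n a c := by
  obtain ⟨l, e, he, σ, hσ⟩ := hab
  obtain ⟨m, f, hf, τ, hτ⟩ := hbc
  refine ⟨l * m, fun i => e i * f (σ i), fun i => ?_, σ.trans τ, fun i => ?_⟩
  · rcases he i with h | h <;> rcases hf (σ i) with h' | h' <;> simp [h, h']
  · rw [hσ i, hτ (σ i)]
    push_cast
    ring_nf
    rfl

lemma te_equivalence (n : ℕ) : Equivalence (TupleEquiv q n) :=
  ⟨te_refl n, te_symm, te_trans⟩

lemma te_of_quot_eq {n : ℕ} {a b : AdmissibleTuple q n}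
    (h : Quot.mk (TupleEquiv q n) a = Quot.mk (TupleEquiv q n) b) : TupleEquiv q n a b :=
  ((te_equivalence n).eqvGen_iff).mp (Quot.eqvGen_exact h)

lemma tau_eq_of_equiv {n : ℕ} {a b : AdmissibleTuple q n} (h : TupleEquiv q n a b) :
    tau a = tau b := by
  classical
  obtain ⟨l, e, he, σ, hσ⟩ := h
  unfold tau
  apply Finset.card_bij (fun i _ => σ i)
  · intro i hi
    simp only [Finset.mem_filter, Finset.mem_univ, true_and] at hi ⊢
    intro hu
    exact hi (by rw [hσ i]; exact ((sign_isUnit (he i)).mul l.isUnit).mul hu)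
  · intro i _ j _ hij
    exact σ.injective hij
  · intro j hj
    refine ⟨σ.symm j, ?_, by simp⟩
    simp only [Finset.mem_filter, Finset.mem_univ, true_and] at hj ⊢
    intro hu
    apply hj
    have h1 := hσ (σ.symm j)
    rw [Equiv.apply_symm_apply] at h1
    exact isUnit_of_mul_isUnit_right (h1 ▸ hu)

lemma tau_mkTuple {q₀ n : ℕ} (s : Finset (ZMod q)) (h) :
    tau (mkTuple q₀ n s h) = (s.filter (fun z => ¬ IsUnit z)).card := by
  classical
  unfold tau mkTuple
  apply Finset.card_bij (fun i _ => tupleOf n s h.1 i)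
  · intro i hi
    simp only [Finset.mem_filter, Finset.mem_univ, true_and] at hi ⊢
    exact ⟨tupleOf_mem n s h.1 i, hi⟩
  · intro i _ j _ hij
    exact tupleOf_injective n s h.1 hij
  · intro x hx
    simp only [Finset.mem_filter, Finset.mem_univ, true_and] at hx
    obtain ⟨i, hi⟩ := tupleOf_surj n s h.1 hx.1
    exact ⟨i, by simp [hi, hx.2], hi⟩


open Classical in
lemma key {q₀ n : ℕ} (h1 : 2 * q₀ ≤ q) (h2 : q ≤ 2 * q₀ + 1) {s s' : Finset (ZMod q)}
    (hcond : s.card = n ∧ (∀ z ∈ s, 1 ≤ z.val ∧ z.val ≤ q₀) ∧ (1 : ZMod q) ∈ s ∧ 2 * q₀ ≤ q)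
    (hcond' : s'.card = n ∧ (∀ z ∈ s', 1 ≤ z.val ∧ z.val ≤ q₀) ∧ (1 : ZMod q) ∈ s' ∧ 2 * q₀ ≤ q)
    (heq : TupleEquiv q n (mkTuple q₀ n s hcond) (mkTuple q₀ n s' hcond')) :
    ∃ x ∈ s'.filter IsUnit,
      s = s'.image (fun y => nrm q₀ (Ring.inverse x * y)) := by
  obtain ⟨l, e, he, σ, hσ⟩ := heq
  have hc := hcond.1
  have hA := hcond.2.1
  have h1s := hcond.2.2.1
  have hc' := hcond'.1
  have hA' := hcond'.2.1
  have h1s' := hcond'.2.2.1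
  set p := tupleOf n s hc with hp
  set p' := tupleOf n s' hc' with hp'
  obtain ⟨i₀, hi₀⟩ := tupleOf_surj n s hc h1s
  set x := p' (σ i₀) with hx
  have hxs' : x ∈ s' := tupleOf_mem n s' hc' _
  have hx1 : (1 : ZMod q) = e i₀ * (l : ZMod q) * x := by
    rw [← hi₀]; exact hσ i₀
  have hxu : IsUnit x := isUnit_of_mul_isUnit_right (hx1 ▸ isUnit_one)
  have hinv : Ring.inverse x = e i₀ * (l : ZMod q) := by
    have hmc : Ring.inverse x * x = 1 := Ring.inverse_mul_cancel x hxu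
    calc Ring.inverse x = Ring.inverse x * 1 := by rw [mul_one]
      _ = Ring.inverse x * (e i₀ * (l : ZMod q) * x) := by rw [← hx1]
      _ = e i₀ * (l : ZMod q) * (Ring.inverse x * x) := by ring
      _ = e i₀ * (l : ZMod q) := by rw [hmc, mul_one]
  refine ⟨x, Finset.mem_filter.mpr ⟨hxs', hxu⟩, ?_⟩
  apply Finset.eq_of_subset_of_card_le
  · intro z hz
    obtain ⟨i, hi⟩ := tupleOf_surj n s hc hz
    have hzi : z = e i * (l : ZMod q) * p' (σ i) := by rw [← hi]; exact hσ i
    refine Finset.mem_image.mpr ⟨p' (σ i), tupleOf_mem n s' hc' _, ?_⟩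
    rw [hinv]
    refine (nrm_uniq h1 h2 (hA z hz).2 ?_).symm
    rcases he i with hei | hei
    · rcases he i₀ with hei0 | hei0
      · exact Or.inl (by rw [hzi, hei, hei0])
      · exact Or.inr (by rw [hzi, hei, hei0]; ring)
    · rcases he i₀ with hei0 | hei0
      · exact Or.inr (by rw [hzi, hei, hei0]; ring)
      · exact Or.inl (by rw [hzi, hei, hei0])
  · calc (s'.image (fun y => nrm q₀ (Ring.inverse x * y))).card ≤ s'.card :=
        Finset.card_image_le
      _ = s.card := by rw [hc, hc']


open Finset in
lemma card_A {q₀ : ℕ} (hlt : q₀ < q) :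
    (Finset.univ.filter (fun z : ZMod q => 1 ≤ z.val ∧ z.val ≤ q₀)).card = q₀ := by
  classical
  have himg : Finset.univ.filter (fun z : ZMod q => 1 ≤ z.val ∧ z.val ≤ q₀)
      = (Finset.Icc 1 q₀).image (Nat.cast) := by
    ext z
    simp only [mem_filter, mem_univ, true_and, mem_image, mem_Icc]
    constructor
    · rintro ⟨hz1, hz2⟩
      exact ⟨z.val, ⟨hz1, hz2⟩, ZMod.natCast_rightInverse z⟩
    · rintro ⟨x, ⟨hx1, hx2⟩, rfl⟩
      rw [ZMod.val_cast_of_lt (by omega)]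
      exact ⟨hx1, hx2⟩
  rw [himg, Finset.card_image_of_injOn, Nat.card_Icc]
  · omega
  · intro x hx y hy hxy
    simp only [coe_Icc, Set.mem_Icc] at hx hy
    have := congrArg ZMod.val hxy
    rwa [ZMod.val_cast_of_lt (by omega), ZMod.val_cast_of_lt (by omega)] at this

open Finset in
lemma card_R {q₀ : ℕ} (hlt : q₀ < q) :
    ((Finset.univ.filter (fun z : ZMod q => 1 ≤ z.val ∧ z.val ≤ q₀)).filter
        (fun z => ¬ IsUnit z)).card
      = ((Finset.Icc 1 q₀).filter (fun x => Nat.gcd x q ≠ 1)).card := by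
  classical
  have himg : (Finset.univ.filter (fun z : ZMod q => 1 ≤ z.val ∧ z.val ≤ q₀)).filter
        (fun z => ¬ IsUnit z)
      = ((Finset.Icc 1 q₀).filter (fun x => Nat.gcd x q ≠ 1)).image (Nat.cast) := by
    ext z
    simp only [mem_filter, mem_univ, true_and, mem_image, mem_Icc]
    constructor
    · rintro ⟨⟨hz1, hz2⟩, hzu⟩
      refine ⟨z.val, ⟨⟨hz1, hz2⟩, ?_⟩, ZMod.natCast_rightInverse z⟩
      intro hg
      exact hzu (by
        have := (ZMod.isUnit_iff_coprime z.val q).mpr hg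
        rwa [ZMod.natCast_rightInverse z] at this)
    · rintro ⟨x, ⟨⟨hx1, hx2⟩, hg⟩, rfl⟩
      refine ⟨⟨?_, ?_⟩, ?_⟩
      · rw [ZMod.val_cast_of_lt (by omega)]; exact hx1
      · rw [ZMod.val_cast_of_lt (by omega)]; exact hx2
      · intro hu
        exact hg ((ZMod.isUnit_iff_coprime x q).mp hu)
  rw [himg, Finset.card_image_of_injOn]
  intro x hx y hy hxy
  simp only [coe_filter, Set.mem_setOf_eq, mem_Icc] at hx hy
  have := congrArg ZMod.val hxy
  rwa [ZMod.val_cast_of_lt (by omega), ZMod.val_cast_of_lt (by omega)] at this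

end Stmt14

/-- With `k = q₀ - n`, `r` the number of residues `≤ q₀` not coprime to `q`, and
`u = r - k` if `r > k`, `u = 0` otherwise, the number of equivalence classes
`|I₀(q,n)|` is at least `∑_{t=u}^{r} (1/(n-t))·C(q₀-1-r, n-1-t)·C(r,t)`. -/
theorem stmt_14 (q n q₀ k r u : ℕ) (hq : 0 < q) (hn : 2 ≤ n)
    (hq₀ : q₀ = if q % 2 = 1 then (q - 1) / 2 else q / 2) (hnq₀ : n ≤ q₀ - 2)
    (hk : k = q₀ - n)
    (hr : r = ((Finset.Icc 1 q₀).filter (fun x => Nat.gcd x q ≠ 1)).card)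
    (hu : u = if k < r then r - k else 0) :
    ∑ t ∈ Finset.Icc u r,
        (1 / ((n : ℚ) - t)) * (Nat.choose (q₀ - 1 - r) (n - 1 - t)) * (Nat.choose r t)
      ≤ Nat.card (Quot (TupleEquiv q n)) := by
  classical
  haveI : NeZero q := ⟨hq.ne'⟩
  have hq₀4 : 4 ≤ q₀ := by omega
  have hq2 : 2 * q₀ ≤ q ∧ q ≤ 2 * q₀ + 1 := by
    by_cases hpar : q % 2 = 1
    · rw [if_pos hpar] at hq₀; omega
    · rw [if_neg hpar] at hq₀; omega
  obtain ⟨h2a, h2b⟩ := hq2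
  have hltq : q₀ < q := by omega
  haveI : Fact (1 < q) := ⟨by omega⟩
  have h1v : (1 : ZMod q).val = 1 := ZMod.val_one q
  set A : Finset (ZMod q) := Finset.univ.filter (fun z : ZMod q => 1 ≤ z.val ∧ z.val ≤ q₀)
    with hA
  have h1A : (1 : ZMod q) ∈ A := by
    rw [hA]; exact Finset.mem_filter.mpr ⟨Finset.mem_univ _, by rw [h1v]; omega⟩
  have hAcard : A.card = q₀ := Stmt14.card_A hltq
  have hRcard : (A.filter (fun z => ¬ IsUnit z)).card = r := by
    rw [hr]; exact Stmt14.card_R hltq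
  set AE : Finset (ZMod q) := A.erase 1 with hAE
  have hAEcard : AE.card = q₀ - 1 := by rw [hAE, Finset.card_erase_of_mem h1A, hAcard]
  have hRAE : A.filter (fun z => ¬ IsUnit z) = AE.filter (fun z => ¬ IsUnit z) := by
    ext z
    simp only [Finset.mem_filter, hAE, Finset.mem_erase]
    constructor
    · rintro ⟨hzA, hzu⟩
      exact ⟨⟨fun h => hzu (h ▸ isUnit_one), hzA⟩, hzu⟩
    · rintro ⟨⟨_, hzA⟩, hzu⟩
      exact ⟨hzA, hzu⟩
  have hUcard : (AE.filter (fun z => IsUnit z)).card = q₀ - 1 - r := by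
    have h3 := Finset.card_filter_add_card_filter_not
      (s := AE) (p := fun z : ZMod q => IsUnit z)
    rw [← hRAE, hRcard, hAEcard] at h3
    omega
  -- the admissibility condition
  set Cond : Finset (ZMod q) → Prop := fun s =>
    (insert (1 : ZMod q) s).card = n ∧
      (∀ z ∈ insert (1 : ZMod q) s, 1 ≤ z.val ∧ z.val ≤ q₀) ∧
        (1 : ZMod q) ∈ insert (1 : ZMod q) s ∧ 2 * q₀ ≤ q with hCondDef
  have hCond : ∀ s, s ⊆ AE → s.card = n - 1 → Cond s := by
    intro s hsub hcard
    have h1ns : (1 : ZMod q) ∉ s := fun h => (Finset.mem_erase.mp (hsub h)).1 rfl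
    refine ⟨?_, ?_, Finset.mem_insert_self _ _, h2a⟩
    · rw [Finset.card_insert_of_notMem h1ns, hcard]; omega
    · intro z hz
      rcases Finset.mem_insert.mp hz with h | h
      · subst h; rw [h1v]; omega
      · have h4 := Finset.mem_erase.mp (hsub h)
        exact (Finset.mem_filter.mp h4.2).2
  obtain ⟨s₀, hs₀sub, hs₀card⟩ : ∃ s₀ ⊆ AE, s₀.card = n - 1 :=
    Finset.exists_subset_card_eq (by rw [hAEcard]; omega)
  set d : AdmissibleTuple q n := Stmt14.mkTuple q₀ n _ (hCond s₀ hs₀sub hs₀card) with hd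
  haveI : Finite (AdmissibleTuple q n) := by unfold AdmissibleTuple; infer_instance
  haveI : Fintype (Quot (TupleEquiv q n)) := Fintype.ofFinite _
  set Ψ : Finset (ZMod q) → Quot (TupleEquiv q n) := fun s =>
    if h : Cond s then Quot.mk _ (Stmt14.mkTuple q₀ n (insert 1 s) h) else Quot.mk _ d
    with hΨdef
  set St : ℕ → Finset (Finset (ZMod q)) := fun t =>
    (AE.powersetCard (n - 1)).filter (fun s => (s.filter (fun z => ¬ IsUnit z)).card = t)
    with hStdef
  have hStmem : ∀ t s, s ∈ St t →
      s ⊆ AE ∧ s.card = n - 1 ∧ (s.filter fun z => ¬ IsUnit z).card = t := by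
    intro t s hs
    rw [hStdef] at hs
    have h3 := Finset.mem_filter.mp hs
    have h4 := Finset.mem_powersetCard.mp h3.1
    exact ⟨h4.1, h4.2, h3.2⟩
  have hΨeq : ∀ t s (hs : s ∈ St t), Ψ s = Quot.mk _
      (Stmt14.mkTuple q₀ n (insert 1 s) (hCond s (hStmem t s hs).1 (hStmem t s hs).2.1)) := by
    intro t s hs
    rw [hΨdef]
    exact dif_pos _
  have htau : ∀ t s, s ∈ St t → ∀ (h : Cond s),
      Stmt14.tau (Stmt14.mkTuple q₀ n (insert 1 s) h) = t := by
    intro t s hs h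
    obtain ⟨hsub, hcard, hflt⟩ := hStmem t s hs
    have h1ns : (1 : ZMod q) ∉ s := fun hmem => (Finset.mem_erase.mp (hsub hmem)).1 rfl
    rw [Stmt14.tau_mkTuple]
    rw [Finset.filter_insert, if_neg (not_not_intro isUnit_one)]
    exact hflt
  -- disjointness of images across different t
  have hdisj : ∀ t t' : ℕ, t ≠ t' → Disjoint ((St t).image Ψ) ((St t').image Ψ) := by
    intro t t' htt'
    rw [Finset.disjoint_left]
    intro c hc hc'
    obtain ⟨s, hs, hcs⟩ := Finset.mem_image.mp hc
    obtain ⟨s', hs', hcs'⟩ := Finset.mem_image.mp hc'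
    have e1 := hΨeq t s hs
    have e2 := hΨeq t' s' hs'
    have hQeq : Quot.mk (TupleEquiv q n)
          (Stmt14.mkTuple q₀ n (insert 1 s) (hCond s (hStmem t s hs).1 (hStmem t s hs).2.1))
        = Quot.mk (TupleEquiv q n)
          (Stmt14.mkTuple q₀ n (insert 1 s')
            (hCond s' (hStmem t' s' hs').1 (hStmem t' s' hs').2.1)) := by
      rw [← e1, ← e2, hcs, hcs']
    have hte := Stmt14.te_of_quot_eq hQeq
    have htaueq := Stmt14.tau_eq_of_equiv hte
    rw [htau t s hs _, htau t' s' hs' _] at htaueq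
    exact htt' htaueq
  -- fiber bound
  have hfiber : ∀ t, ∀ c ∈ (St t).image Ψ,
      ((St t).filter (fun s => Ψ s = c)).card ≤ n - t := by
    intro t c hc
    obtain ⟨s₁, hs₁, rfl⟩ := Finset.mem_image.mp hc
    obtain ⟨hsub₁, hcard₁, hflt₁⟩ := hStmem t s₁ hs₁
    have h1ns₁ : (1 : ZMod q) ∉ s₁ := fun hmem => (Finset.mem_erase.mp (hsub₁ hmem)).1 rfl
    set g : ZMod q → Finset (ZMod q) := fun x =>
      ((insert (1 : ZMod q) s₁).image (fun y => Stmt14.nrm q₀ (Ring.inverse x * y))).erase 1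
      with hg
    have hsubfib : (St t).filter (fun s => Ψ s = Ψ s₁) ⊆
        ((insert (1 : ZMod q) s₁).filter IsUnit).image g := by
      intro s' hmem'
      obtain ⟨hs't, hΨs'⟩ := Finset.mem_filter.mp hmem'
      obtain ⟨hsub', hcard', -⟩ := hStmem t s' hs't
      have h1ns' : (1 : ZMod q) ∉ s' := fun hmem => (Finset.mem_erase.mp (hsub' hmem)).1 rfl
      have hQeq : Quot.mk (TupleEquiv q n)
            (Stmt14.mkTuple q₀ n (insert 1 s')
              (hCond s' (hStmem t s' hs't).1 (hStmem t s' hs't).2.1))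
          = Quot.mk (TupleEquiv q n)
            (Stmt14.mkTuple q₀ n (insert 1 s₁)
              (hCond s₁ (hStmem t s₁ hs₁).1 (hStmem t s₁ hs₁).2.1)) := by
        rw [← hΨeq t s' hs't, ← hΨeq t s₁ hs₁, hΨs']
      have hte := Stmt14.te_of_quot_eq hQeq
      obtain ⟨x, hxmem, himg⟩ := Stmt14.key h2a h2b _ _ hte
      refine Finset.mem_image.mpr ⟨x, hxmem, ?_⟩
      show ((insert (1 : ZMod q) s₁).image (fun y => Stmt14.nrm q₀ (Ring.inverse x * y))).erase 1
        = s'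
      rw [← himg, Finset.erase_insert h1ns']
    calc ((St t).filter (fun s => Ψ s = Ψ s₁)).card
        ≤ (((insert (1 : ZMod q) s₁).filter IsUnit).image g).card :=
          Finset.card_le_card hsubfib
      _ ≤ ((insert (1 : ZMod q) s₁).filter IsUnit).card := Finset.card_image_le
      _ ≤ n - t := by
          have hcardins : (insert (1 : ZMod q) s₁).card = n :=
            (hCond s₁ hsub₁ hcard₁).1
          have hfneg : ((insert (1 : ZMod q) s₁).filter (fun z => ¬ IsUnit z)).card = t := by
            rw [Finset.filter_insert, if_neg (not_not_intro isUnit_one)]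
            exact hflt₁
          have h5 : ((insert (1 : ZMod q) s₁).filter IsUnit).card
              + ((insert (1 : ZMod q) s₁).filter (fun z : ZMod q => ¬ IsUnit z)).card
              = (insert (1 : ZMod q) s₁).card := by
            exact Finset.card_filter_add_card_filter_not _
          rw [hcardins, hfneg] at h5
          omega
  -- lower bound for the number of normalized representatives
  have hStcard : ∀ t, t < n →
      Nat.choose (q₀ - 1 - r) (n - 1 - t) * Nat.choose r t ≤ (St t).card := by
    intro t ht
    have hcardprod :
        (((AE.filter (fun z => IsUnit z)).powersetCard (n - 1 - t)) ×ˢ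
          ((A.filter (fun z => ¬ IsUnit z)).powersetCard t)).card
        = Nat.choose (q₀ - 1 - r) (n - 1 - t) * Nat.choose r t := by
      rw [Finset.card_product, Finset.card_powersetCard, Finset.card_powersetCard,
        hUcard, hRcard]
    rw [← hcardprod]
    apply Finset.card_le_card_of_injOn (fun p => p.1 ∪ p.2)
    · rintro ⟨a, b⟩ hab
      rw [Finset.mem_coe, Finset.mem_product] at hab
      obtain ⟨ha, hb⟩ := hab
      have haU := Finset.mem_powersetCard.mp ha
      have hbR := Finset.mem_powersetCard.mp hb
      have haunit : ∀ z ∈ a, IsUnit z := fun z hz => (Finset.mem_filter.mp (haU.1 hz)).2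
      have hbnon : ∀ z ∈ b, ¬ IsUnit z := fun z hz => (Finset.mem_filter.mp (hbR.1 hz)).2
      have hdisjab : Disjoint a b :=
        Finset.disjoint_left.mpr (fun z hz hz' => hbnon z hz' (haunit z hz))
      rw [hStdef]
      refine Finset.mem_filter.mpr ⟨Finset.mem_powersetCard.mpr ⟨?_, ?_⟩, ?_⟩
      · intro z hz
        rcases Finset.mem_union.mp hz with h | h
        · exact (Finset.mem_filter.mp (haU.1 h)).1
        · have h6 := Finset.mem_filter.mp (hbR.1 h)
          rw [hAE]
          exact Finset.mem_erase.mpr ⟨fun he => h6.2 (he ▸ isUnit_one), h6.1⟩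
      · rw [Finset.card_union_of_disjoint hdisjab, haU.2, hbR.2]; omega
      · rw [Finset.filter_union]
        have hfa : a.filter (fun z => ¬ IsUnit z) = ∅ :=
          Finset.filter_eq_empty_iff.mpr (fun z hz => not_not_intro (haunit z hz))
        have hfb : b.filter (fun z => ¬ IsUnit z) = b := Finset.filter_eq_self.mpr hbnon
        rw [hfa, hfb, Finset.empty_union, hbR.2]
    · rintro ⟨a, b⟩ hab ⟨a', b'⟩ hab' heq2
      simp only [Finset.coe_product, Set.mem_prod, Finset.mem_coe] at hab hab'
      obtain ⟨ha, hb⟩ := hab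
      obtain ⟨ha', hb'⟩ := hab'
      have haU := Finset.mem_powersetCard.mp ha
      have hbR := Finset.mem_powersetCard.mp hb
      have haU' := Finset.mem_powersetCard.mp ha'
      have hbR' := Finset.mem_powersetCard.mp hb'
      have haunit : ∀ z ∈ a, IsUnit z := fun z hz => (Finset.mem_filter.mp (haU.1 hz)).2
      have hbnon : ∀ z ∈ b, ¬ IsUnit z := fun z hz => (Finset.mem_filter.mp (hbR.1 hz)).2
      have haunit' : ∀ z ∈ a', IsUnit z := fun z hz => (Finset.mem_filter.mp (haU'.1 hz)).2
      have hbnon' : ∀ z ∈ b', ¬ IsUnit z := fun z hz => (Finset.mem_filter.mp (hbR'.1 hz)).2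
      have hrecover : ∀ (x y : Finset (ZMod q)), (∀ z ∈ x, IsUnit z) → (∀ z ∈ y, ¬ IsUnit z) →
          (x ∪ y).filter (fun z => IsUnit z) = x ∧ (x ∪ y).filter (fun z => ¬ IsUnit z) = y := by
        intro x y hx hy
        constructor
        · rw [Finset.filter_union, Finset.filter_eq_self.mpr hx,
            Finset.filter_eq_empty_iff.mpr hy, Finset.union_empty]
        · rw [Finset.filter_union,
            Finset.filter_eq_empty_iff.mpr (fun z hz => not_not_intro (hx z hz)),
            Finset.filter_eq_self.mpr hy, Finset.empty_union]
      obtain ⟨hr1, hr2⟩ := hrecover a b haunit hbnon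
      obtain ⟨hr1', hr2'⟩ := hrecover a' b' haunit' hbnon'
      have heq3 : a ∪ b = a' ∪ b' := heq2
      have : a = a' := by rw [← hr1, ← hr1', heq3]
      have hbb : b = b' := by rw [← hr2, ← hr2', heq3]
      exact Prod.ext this hbb
  -- combine: per-t bound in ℕ
  have hmain : ∀ t, t < n → (Nat.choose (q₀ - 1 - r) (n - 1 - t) * Nat.choose r t : ℕ)
      ≤ (n - t) * ((St t).image Ψ).card := by
    intro t ht
    exact (hStcard t ht).trans (Finset.card_le_mul_card_image (St t) (n - t) (hfiber t))
  have hterm : ∀ t ∈ (Finset.Icc u r).filter (fun t => t < n),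
      (1 / ((n : ℚ) - t)) * (Nat.choose (q₀ - 1 - r) (n - 1 - t)) * (Nat.choose r t)
        ≤ (((St t).image Ψ).card : ℚ) := by
    intro t ht
    have htn : t < n := (Finset.mem_filter.mp ht).2
    have hpos : (0 : ℚ) < (n : ℚ) - t := by
      have h7 : (t : ℚ) < n := by exact_mod_cast htn
      linarith
    rw [show (1 / ((n : ℚ) - t)) * (Nat.choose (q₀ - 1 - r) (n - 1 - t)) * (Nat.choose r t)
        = ((Nat.choose (q₀ - 1 - r) (n - 1 - t) : ℚ) * (Nat.choose r t)) / ((n : ℚ) - t)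
      from by ring]
    rw [div_le_iff₀ hpos]
    have hcast : ((n : ℚ) - t) = ((n - t : ℕ) : ℚ) := (Nat.cast_sub htn.le).symm
    rw [hcast]
    have h8 := (hmain t htn).trans_eq (mul_comm _ _)
    exact_mod_cast h8
  have hbiU : ∑ t ∈ (Finset.Icc u r).filter (fun t => t < n), (((St t).image Ψ).card : ℕ)
      = (((Finset.Icc u r).filter (fun t => t < n)).biUnion (fun t => (St t).image Ψ)).card := by
    rw [Finset.card_biUnion (fun t _ t' _ htt' => hdisj t t' htt')]
  have hcardQ : ((((Finset.Icc u r).filter (fun t => t < n)).biUnion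
      (fun t => (St t).image Ψ)).card : ℕ) ≤ Fintype.card (Quot (TupleEquiv q n)) :=
    Finset.card_le_univ _
  have hsplit := Finset.sum_filter_add_sum_filter_not (Finset.Icc u r) (fun t => t < n)
    (fun t => (1 / ((n : ℚ) - t)) * (Nat.choose (q₀ - 1 - r) (n - 1 - t)) * (Nat.choose r t))
  have hneg : ∑ t ∈ (Finset.Icc u r).filter (fun t => ¬ t < n),
      (1 / ((n : ℚ) - t)) * (Nat.choose (q₀ - 1 - r) (n - 1 - t)) * (Nat.choose r t) ≤ 0 := by
    apply Finset.sum_nonpos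
    intro t ht
    have htn : n ≤ t := not_lt.mp (Finset.mem_filter.mp ht).2
    have h9 : (1 : ℚ) / ((n : ℚ) - t) ≤ 0 := by
      rcases eq_or_lt_of_le htn with heq | hlt
      · rw [← heq]
        simp
      · apply div_nonpos_of_nonneg_of_nonpos zero_le_one
        have h12 : (n : ℚ) < t := by exact_mod_cast hlt
        linarith
    have h10 : (0 : ℚ) ≤ (Nat.choose (q₀ - 1 - r) (n - 1 - t) : ℚ) := Nat.cast_nonneg _
    have h11 : (0 : ℚ) ≤ (Nat.choose r t : ℚ) := Nat.cast_nonneg _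
    exact mul_nonpos_of_nonpos_of_nonneg (mul_nonpos_of_nonpos_of_nonneg h9 h10) h11
  calc ∑ t ∈ Finset.Icc u r,
        (1 / ((n : ℚ) - t)) * (Nat.choose (q₀ - 1 - r) (n - 1 - t)) * (Nat.choose r t)
      = (∑ t ∈ (Finset.Icc u r).filter (fun t => t < n),
          (1 / ((n : ℚ) - t)) * (Nat.choose (q₀ - 1 - r) (n - 1 - t)) * (Nat.choose r t))
        + ∑ t ∈ (Finset.Icc u r).filter (fun t => ¬ t < n),
          (1 / ((n : ℚ) - t)) * (Nat.choose (q₀ - 1 - r) (n - 1 - t)) * (Nat.choose r t) :=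
        hsplit.symm
    _ ≤ ∑ t ∈ (Finset.Icc u r).filter (fun t => t < n),
          (1 / ((n : ℚ) - t)) * (Nat.choose (q₀ - 1 - r) (n - 1 - t)) * (Nat.choose r t) := by
        linarith
    _ ≤ ∑ t ∈ (Finset.Icc u r).filter (fun t => t < n), (((St t).image Ψ).card : ℚ) :=
        Finset.sum_le_sum hterm
    _ = ((∑ t ∈ (Finset.Icc u r).filter (fun t => t < n), ((St t).image Ψ).card : ℕ) : ℚ) := by
        push_cast
        rfl
    _ ≤ (Fintype.card (Quot (TupleEquiv q n)) : ℚ) := by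
        rw [hbiU]
        exact_mod_cast hcardQ
    _ = (Nat.card (Quot (TupleEquiv q n)) : ℚ) := by rw [Nat.card_eq_fintype_card]
end
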